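/- Let E be a monotonically complete Banach lattice with the Fatou property, (T_i)_{i∈I} a commuting family of positive linear contractions on E, and g ∈ E a super fixed point of the family (i.e., T_i g ≥ g for all i). Then there exists a smallest fixed vector f of the family with g ≤ f; moreover, if g ≥ 0, then ‖f‖ = ‖g‖. -/

import Mathlib

/-- Remark (e): if `g` is a super fixed point of a commuting family of positive
linear contractions on a monotonically complete Banach lattice with the Fatou
property, then there is a smallest common fixed vector `f` with `g ≤ f`; moreover
`‖f‖ = ‖g‖` whenever `g ≥ 0`. -/
theorem smallest_fixed_vector_above_super_fixed_point
    {E : Type*} [NormedAddCommGroup E] [Lattice E] [HasSolidNorm E]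
    [IsOrderedAddMonoid E] [NormedSpace ℝ E] [CompleteSpace E]
    (hmc : ∀ D : Set E, D.Nonempty → DirectedOn (· ≤ ·) D → (∀ x ∈ D, 0 ≤ x) →
      (∃ C : ℝ, ∀ x ∈ D, ‖x‖ ≤ C) → ∃ b : E, IsLUB D b)
    (hfatou : ∀ (D : Set E) (b : E), D.Nonempty → DirectedOn (· ≤ ·) D →
      (∀ x ∈ D, 0 ≤ x) → IsLUB D b → ‖b‖ = ⨆ x : D, ‖(x : E)‖)
    {I : Type*} (T : I → E →L[ℝ] E)
    (hpos : ∀ i, ∀ x : E, 0 ≤ x → 0 ≤ T i x) (hcontr : ∀ i, ‖T i‖ ≤ 1)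
    (hcomm : ∀ i j, (T i).comp (T j) = (T j).comp (T i))
    (g : E) (hg : ∀ i, g ≤ T i g) :
    ∃ f : E, IsLeast {h : E | (∀ i, T i h = h) ∧ g ≤ h} f ∧
      (0 ≤ g → ‖f‖ = ‖g‖) := by
  -- monotonicity of each `T i`
  have Tmono : ∀ i, Monotone (T i) := by
    intro i x y hxy
    have h0 : (0 : E) ≤ T i (y - x) := hpos i (y - x) (sub_nonneg.2 hxy)
    rw [map_sub] at h0
    exact sub_nonneg.1 h0
  -- contraction on elements
  have Tnorm : ∀ i (x : E), ‖T i x‖ ≤ ‖x‖ := by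
    intro i x
    calc ‖T i x‖ ≤ ‖T i‖ * ‖x‖ := (T i).le_opNorm x
    _ ≤ 1 * ‖x‖ := mul_le_mul_of_nonneg_right (hcontr i) (norm_nonneg x)
    _ = ‖x‖ := one_mul _
  -- commutation on elements
  have hcommE : ∀ i j (x : E), T i (T j x) = T j (T i x) := fun i j x =>
    ContinuousLinearMap.ext_iff.1 (hcomm i j) x
  -- the positive part of `g` is a nonnegative super fixed point
  set gp : E := g ⊔ 0 with hgp_def
  have hgp0 : (0 : E) ≤ gp := le_sup_right
  have hggp : g ≤ gp := le_sup_left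
  have hgp_super : ∀ i, gp ≤ T i gp :=
    fun i => sup_le ((hg i).trans (Tmono i hggp)) (hpos i gp hgp0)
  -- First Zorn: a fixed point `f₀ ≥ gp` with `‖f₀‖ ≤ ‖gp‖`
  set B : Set E := {x | gp ≤ x ∧ (∀ i, x ≤ T i x) ∧ ‖x‖ ≤ ‖gp‖} with hB_def
  have hBchain : ∀ c ⊆ B, IsChain (· ≤ ·) c → ∀ y ∈ c, ∃ ub ∈ B, ∀ z ∈ c, z ≤ ub := by
    intro c hcB hchain y hyc
    obtain ⟨b, hb⟩ := hmc c ⟨y, hyc⟩ hchain.directedOn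
      (fun x hx => hgp0.trans (hcB hx).1) ⟨‖gp‖, fun x hx => (hcB hx).2.2⟩
    refine ⟨b, ⟨(hcB hyc).1.trans (hb.1 hyc), ?_, ?_⟩, fun z hz => hb.1 hz⟩
    · intro i
      exact hb.2 fun x hx => (hcB hx).2.1 i |>.trans (Tmono i (hb.1 hx))
    · rw [hfatou c b ⟨y, hyc⟩ hchain.directedOn (fun x hx => hgp0.trans (hcB hx).1) hb]
      exact Real.iSup_le (fun x => (hcB x.2).2.2) (norm_nonneg gp)
  obtain ⟨f₀, hgpf₀, hf₀B, hf₀max⟩ :=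
    zorn_le_nonempty₀ B hBchain gp ⟨le_rfl, hgp_super, le_rfl⟩
  obtain ⟨hf₀1, hf₀2, hf₀3⟩ := hf₀B
  have hf₀fix : ∀ i, T i f₀ = f₀ := by
    intro i
    have hmem : T i f₀ ∈ B := by
      refine ⟨hf₀1.trans (hf₀2 i), fun j => ?_, (Tnorm i f₀).trans hf₀3⟩
      rw [hcommE j i]
      exact Tmono i (hf₀2 j)
    exact le_antisymm (hf₀max hmem (hf₀2 i)) (hf₀2 i)
  have hgf₀ : g ≤ f₀ := hggp.trans hf₀1
  -- Second Zorn: smallest fixed point above `g`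
  set A : Set E := {x | g ≤ x ∧ (∀ i, x ≤ T i x) ∧
    ∀ h : E, (∀ i, T i h = h) → g ≤ h → x ≤ h} with hA_def
  have hAle : ∀ x ∈ A, x ≤ f₀ := fun x hx => hx.2.2 f₀ hf₀fix hgf₀
  have hAchain : ∀ c ⊆ A, IsChain (· ≤ ·) c → ∀ y ∈ c, ∃ ub ∈ A, ∀ z ∈ c, z ≤ ub := by
    intro c hcA hchain y hyc
    set D : Set E := (fun x => x - g) '' c with hD_def
    have hDdir : DirectedOn (· ≤ ·) D := by
      rintro _ ⟨p, hp, rfl⟩ _ ⟨q, hq, rfl⟩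
      obtain ⟨r, hr, hpr, hqr⟩ := hchain.directedOn p hp q hq
      exact ⟨r - g, ⟨r, hr, rfl⟩, sub_le_sub_right hpr g, sub_le_sub_right hqr g⟩
    have hDpos : ∀ x ∈ D, (0 : E) ≤ x := by
      rintro _ ⟨p, hp, rfl⟩; exact sub_nonneg.2 (hcA hp).1
    have hDbd : ∀ x ∈ D, ‖x‖ ≤ ‖f₀ - g‖ := by
      rintro _ ⟨p, hp, rfl⟩
      refine norm_le_norm_of_abs_le_abs ?_
      rw [abs_of_nonneg (sub_nonneg.2 (hcA hp).1),
        abs_of_nonneg (sub_nonneg.2 hgf₀)]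
      exact sub_le_sub_right (hAle p (hcA hp)) g
    obtain ⟨b', hb'⟩ := hmc D ⟨y - g, ⟨y, hyc, rfl⟩⟩ hDdir hDpos ⟨‖f₀ - g‖, hDbd⟩
    have hub : ∀ z ∈ c, z ≤ b' + g := fun z hz =>
      sub_le_iff_le_add.1 (hb'.1 ⟨z, hz, rfl⟩)
    refine ⟨b' + g, ⟨?_, ?_, ?_⟩, hub⟩
    · exact (hcA hyc).1.trans (hub y hyc)
    · intro i
      have : b' ≤ T i (b' + g) - g := by
        refine hb'.2 ?_
        rintro _ ⟨p, hp, rfl⟩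
        exact sub_le_sub_right (((hcA hp).2.1 i).trans (Tmono i (hub p hp))) g
      exact le_sub_iff_add_le.1 this
    · intro h hfix hgh
      have : b' ≤ h - g := hb'.2 (by
        rintro _ ⟨p, hp, rfl⟩
        exact sub_le_sub_right ((hcA hp).2.2 h hfix hgh) g)
      exact le_sub_iff_add_le.1 this
  obtain ⟨m, hgm, hmA, hmmax⟩ :=
    zorn_le_nonempty₀ A hAchain g ⟨le_rfl, hg, fun h _ hgh => hgh⟩
  obtain ⟨hm1, hm2, hm3⟩ := hmA
  have hmfix : ∀ i, T i m = m := by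
    intro i
    have hmem : T i m ∈ A := by
      refine ⟨hm1.trans (hm2 i), fun j => ?_, fun h hfix hgh => ?_⟩
      · rw [hcommE j i]
        exact Tmono i (hm2 j)
      · calc T i m ≤ T i h := Tmono i (hm3 h hfix hgh)
        _ = h := hfix i
    exact le_antisymm (hmmax hmem (hm2 i)) (hm2 i)
  refine ⟨m, ⟨⟨hmfix, hm1⟩, fun h hh => hm3 h hh.1 hh.2⟩, ?_⟩
  intro hg0
  have hgpg : gp = g := sup_eq_left.2 hg0
  have hmf₀ : m ≤ f₀ := hm3 f₀ hf₀fix hgf₀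
  have h1 : ‖g‖ ≤ ‖m‖ := by
    refine norm_le_norm_of_abs_le_abs ?_
    rw [abs_of_nonneg hg0, abs_of_nonneg (hg0.trans hm1)]
    exact hm1
  have h2 : ‖m‖ ≤ ‖f₀‖ := by
    refine norm_le_norm_of_abs_le_abs ?_
    rw [abs_of_nonneg (hg0.trans hm1), abs_of_nonneg ((hg0.trans hm1).trans hmf₀)]
    exact hmf₀
  have h3 : ‖f₀‖ ≤ ‖g‖ := by rw [← hgpg]; exact hf₀3
  exact le_antisymm (h1.antisymm (h2.trans h3) ▸ le_rfl) h1
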